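/- Let X be an infinite-dimensional Banach space and let W ⊂ X be a set with non-empty norm interior. Then W cannot be covered by countably many (w,‖·‖)-LRC sets, i.e., W is not a countable union of sets that are weakly locally relatively norm-compact. -/

import Mathlib

open Set Topology

noncomputable section

/-- `E ⊆ X` is weakly locally relatively norm-compact: every point of `E` has a
weakly open neighbourhood `U` such that the norm closure of `E ∩ U` is norm-compact. -/
def IsWeakLRC {X : Type*} [NormedAddCommGroup X] [NormedSpace ℝ X] (E : Set X) : Prop :=
  ∀ x ∈ E, ∃ U : Set (WeakSpace ℝ X), IsOpen U ∧ toWeakSpace ℝ X x ∈ U ∧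
    IsCompact (closure (E ∩ (fun y : X => toWeakSpace ℝ X y) ⁻¹' U))

lemma weak_nbhd_finset {X : Type*} [NormedAddCommGroup X] [NormedSpace ℝ X]
    (U : Set (WeakSpace ℝ X)) (hU : IsOpen U) (x : X)
    (hx : toWeakSpace ℝ X x ∈ U) :
    ∃ s : Finset (X →L[ℝ] ℝ),
      {y : X | ∀ f ∈ s, f y = f x} ⊆ (fun y : X => toWeakSpace ℝ X y) ⁻¹' U := by
  have hind : IsInducing (fun (z : WeakSpace ℝ X) (f : X →L[ℝ] ℝ) =>
      (topDualPairing ℝ X).flip z f) := ⟨rfl⟩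
  rw [hind.isOpen_iff] at hU
  obtain ⟨V, hV, rfl⟩ := hU
  obtain ⟨I, u, hu, hIu⟩ := isOpen_pi_iff.mp hV _ hx
  refine ⟨I, fun y hy => ?_⟩
  apply hIu
  intro f hf
  have hf' : f ∈ I := hf
  have h1 : (topDualPairing ℝ X).flip (toWeakSpace ℝ X y) f = f y := rfl
  show (topDualPairing ℝ X).flip (toWeakSpace ℝ X y) f ∈ u f
  rw [h1, hy f hf']
  exact (hu f hf').2

theorem stmt10 {X : Type*} [NormedAddCommGroup X] [NormedSpace ℝ X] [CompleteSpace X]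
    (hinf : ¬FiniteDimensional ℝ X)
    (W : Set X) (hW : (interior W).Nonempty)
    (E : ℕ → Set X) (hE : ∀ n, IsWeakLRC (E n)) :
    ¬W ⊆ ⋃ n, E n := by
  intro hsub
  obtain ⟨x₀, hx₀⟩ := hW
  have hWnhds : W ∈ nhds x₀ := mem_interior_iff_mem_nhds.mp hx₀
  obtain ⟨R, hR, hBW⟩ := Metric.nhds_basis_closedBall.mem_iff.mp hWnhds
  set B := Metric.closedBall x₀ R with hBdef
  have hBsub : B ⊆ ⋃ n, E n := fun y hy => hsub (hBW hy)
  haveI : CompleteSpace ↥B := Metric.isClosed_closedBall.completeSpace_coe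
  haveI : Nonempty ↥B := ⟨⟨x₀, Metric.mem_closedBall_self hR.le⟩⟩
  -- Baire category
  have hcover : (⋃ n, (Subtype.val ⁻¹' closure (E n) : Set ↥B)) = univ := by
    ext ⟨y, hy⟩
    simp only [mem_iUnion, mem_univ, iff_true, mem_preimage]
    obtain ⟨n, hn⟩ := mem_iUnion.mp (hBsub hy)
    exact ⟨n, subset_closure hn⟩
  obtain ⟨n, hint⟩ := nonempty_interior_of_iUnion_of_closed
    (fun n => (isClosed_closure).preimage continuous_subtype_val) hcover
  obtain ⟨b, hb⟩ := hint
  have hnhds : (Subtype.val ⁻¹' closure (E n) : Set ↥B) ∈ nhds b :=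
    mem_interior_iff_mem_nhds.mp hb
  obtain ⟨ε, hε, hball⟩ := Metric.mem_nhds_iff.mp hnhds
  -- find a full small ball inside closure (E n)
  set t : ℝ := min 1 (ε / (2 * R)) with ht_def
  have ht0 : 0 < t := lt_min one_pos (by positivity)
  have ht1 : t ≤ 1 := min_le_left _ _
  set δ : ℝ := t * R with hδ_def
  have hδ0 : 0 < δ := mul_pos ht0 hR
  have hδε : δ ≤ ε / 2 := by
    have h2 : t ≤ ε / (2 * R) := min_le_right _ _
    have h3 : (ε / (2 * R)) * R = ε / 2 := by field_simp
    calc δ = t * R := rfl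
      _ ≤ (ε / (2 * R)) * R := by nlinarith
      _ = ε / 2 := h3
  set c : X := (b : X) + t • (x₀ - (b : X)) with hc_def
  have hcx₀ : dist c x₀ ≤ (1 - t) * R := by
    have : c - x₀ = (1 - t) • ((b : X) - x₀) := by
      rw [hc_def]; module
    rw [dist_eq_norm, this, norm_smul, Real.norm_eq_abs, abs_of_nonneg (by linarith)]
    have hbB : dist (b : X) x₀ ≤ R := b.2
    rw [dist_eq_norm] at hbB
    nlinarith [norm_nonneg ((b : X) - x₀)]
  have hcb : dist c (b : X) ≤ δ := by
    rw [hc_def, dist_eq_norm, add_sub_cancel_left, norm_smul, Real.norm_eq_abs,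
      abs_of_nonneg ht0.le]
    have hbB : dist (b : X) x₀ ≤ R := b.2
    rw [dist_comm, dist_eq_norm] at hbB
    calc t * ‖x₀ - (b : X)‖ ≤ t * R := by nlinarith [norm_nonneg (x₀ - (b:X))]
      _ = δ := rfl
  have hballc : Metric.ball c δ ⊆ closure (E n) := by
    intro z hz
    rw [Metric.mem_ball] at hz
    have hzB : z ∈ B := by
      rw [hBdef, Metric.mem_closedBall]
      calc dist z x₀ ≤ dist z c + dist c x₀ := dist_triangle _ _ _
        _ ≤ δ + (1 - t) * R := by linarith [hcx₀]
        _ = R := by rw [hδ_def]; ring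
    have hzb : dist z (b : X) < ε := by
      calc dist z (b : X) ≤ dist z c + dist c (b : X) := dist_triangle _ _ _
        _ < δ + δ := by linarith
        _ ≤ ε := by linarith
    have : (⟨z, hzB⟩ : ↥B) ∈ Metric.ball b ε := by
      rw [Metric.mem_ball, Subtype.dist_eq]; exact hzb
    exact hball this
  -- pick x ∈ E n close to c
  have hcmem : c ∈ closure (E n) := hballc (Metric.mem_ball_self hδ0)
  obtain ⟨x, hxE, hxc⟩ := Metric.mem_closure_iff.mp hcmem (δ / 2) (by positivity)
  set r : ℝ := δ / 2 with hr_def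
  have hr0 : 0 < r := by positivity
  have hballx : Metric.ball x r ⊆ closure (E n) := by
    intro z hz
    apply hballc
    rw [Metric.mem_ball] at hz ⊢
    calc dist z c ≤ dist z x + dist x c := dist_triangle _ _ _
      _ < r + δ / 2 := by rw [dist_comm] at hxc; linarith
      _ = δ := by rw [hr_def]; ring
  -- use LRC at x
  obtain ⟨U, hUopen, hxU, hcomp⟩ := hE n x hxE
  set V : Set X := (fun y : X => toWeakSpace ℝ X y) ⁻¹' U with hV_def
  have hVopen : IsOpen V := hUopen.preimage (toWeakSpaceCLM ℝ X).continuous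
  obtain ⟨s, hs⟩ := weak_nbhd_finset U hUopen x hxU
  -- the finite-codimensional subspace
  set L : X →ₗ[ℝ] (s → ℝ) := LinearMap.pi (fun f : s => ((f : X →L[ℝ] ℝ) : X →ₗ[ℝ] ℝ))
    with hL_def
  set N : Submodule ℝ X := LinearMap.ker L with hN_def
  have hNmem : ∀ y : X, y ∈ N ↔ ∀ f ∈ s, f y = 0 := by
    intro y
    constructor
    · intro hy f hf
      have := congrFun (LinearMap.mem_ker.mp hy) ⟨f, hf⟩
      simpa [hL_def] using this
    · intro hy
      rw [hN_def, LinearMap.mem_ker]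
      funext f
      simpa [hL_def] using hy f.1 f.2
  -- translate of a slice of N sits inside the compact set
  have hkey : ∀ y ∈ N, ‖y‖ < r → x + y ∈ closure (E n ∩ V) := by
    intro y hy hyr
    have h1 : x + y ∈ closure (E n) := by
      apply hballx
      rw [Metric.mem_ball, dist_eq_norm, add_sub_cancel_left]
      exact hyr
    have h2 : x + y ∈ V := by
      apply hs
      intro f hf
      rw [map_add, (hNmem y).mp hy f hf, add_zero]
    have := hVopen.inter_closure (t := E n) ⟨h2, h1⟩
    rwa [inter_comm] at this
  -- the slice is compact
  have hNclosed : IsClosed (N : Set X) := by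
    have : (N : Set X) = ⋂ f ∈ s, (f ⁻¹' {0} : Set X) := by
      ext y
      simp only [SetLike.mem_coe, hNmem, mem_iInter, mem_preimage, mem_singleton_iff]
    rw [this]
    exact isClosed_biInter fun f _ => isClosed_singleton.preimage f.continuous
  set S : Set X := (N : Set X) ∩ Metric.closedBall 0 (r / 2) with hS_def
  have hSsub : (fun y => x + y) '' S ⊆ closure (E n ∩ V) := by
    rintro _ ⟨y, ⟨hyN, hyb⟩, rfl⟩
    refine hkey y hyN ?_
    rw [Metric.mem_closedBall, dist_zero_right] at hyb
    linarith
  have hSclosed : IsClosed ((fun y => x + y) '' S) := by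
    have : (fun y => x + y) '' S = (Homeomorph.addLeft x) '' S := rfl
    rw [this, Homeomorph.isClosed_image]
    exact hNclosed.inter Metric.isClosed_closedBall
  have himgcomp : IsCompact ((fun y => x + y) '' S) :=
    hcomp.of_isClosed_subset hSclosed hSsub
  have hScomp : IsCompact S := by
    have : S = (fun y => -x + y) '' ((fun y => x + y) '' S) := by
      rw [← image_comp]
      simp [Function.comp_def]
    rw [this]
    exact himgcomp.image (continuous_const.add continuous_id)
  -- N is finite dimensional by Riesz
  haveI hNfd : FiniteDimensional ℝ ↥N := by
    apply FiniteDimensional.of_isCompact_closedBall₀ ℝ (half_pos hr0)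
    have himg : Subtype.val '' (Metric.closedBall (0 : ↥N) (r / 2)) = S := by
      ext y
      constructor
      · rintro ⟨⟨y, hyN⟩, hyb, rfl⟩
        rw [Metric.mem_closedBall] at hyb
        refine ⟨hyN, ?_⟩
        rw [Metric.mem_closedBall]
        rwa [Subtype.dist_eq] at hyb
      · rintro ⟨hyN, hyb⟩
        refine ⟨⟨y, hyN⟩, ?_, rfl⟩
        rw [Metric.mem_closedBall] at hyb ⊢
        rwa [Subtype.dist_eq]
    rw [Topology.IsEmbedding.isCompact_iff Topology.IsEmbedding.subtypeVal, himg]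
    exact hScomp
  -- quotient is finite dimensional, hence X is, contradiction
  haveI hQfd : FiniteDimensional ℝ (X ⧸ N) := by
    have e := LinearMap.quotKerEquivRange L
    exact Module.Finite.equiv e.symm
  apply hinf
  have h1 : IsNoetherian ℝ ↥N := IsNoetherian.iff_fg.mpr hNfd
  have h2 : IsNoetherian ℝ (X ⧸ N) := IsNoetherian.iff_fg.mpr hQfd
  exact IsNoetherian.iff_fg.mp ((isNoetherian_iff_submodule_quotient N).mpr ⟨h1, h2⟩)

end
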